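/- The number of n×n magic squares with line sum t satisfies |Σ(n,t)| ≥ C(N+n−1, n−1)⁻² · C(N+n²−1, n²−1), where N = nt. -/

import Mathlib

/-- Number of tuples `u` with `u ≤ w` (pointwise) and sum `a`, as recursion. -/
def gcnt : List ℕ → ℤ → ℕ
  | [], a => if a = 0 then 1 else 0
  | w :: ws, a => ∑ k ∈ Finset.range (w + 1), gcnt ws (a - k)

lemma gcnt_neg : ∀ (ws : List ℕ) (a : ℤ), a < 0 → gcnt ws a = 0
  | [], a, ha => by simp [gcnt]; omega
  | w :: ws, a, ha => by
    simp only [gcnt]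
    refine Finset.sum_eq_zero fun k _ => gcnt_neg ws _ (by have : (0:ℤ) ≤ k := Int.natCast_nonneg k; omega)

lemma gcnt_symm : ∀ (ws : List ℕ) (a : ℤ), gcnt ws a = gcnt ws ((ws.sum : ℤ) - a)
  | [], a => by simp only [gcnt, List.sum_nil]; norm_num
  | w :: ws, a => by
    simp only [gcnt, List.sum_cons]
    rw [← Finset.sum_range_reflect]
    refine Finset.sum_congr rfl fun k hk => ?_
    rw [Finset.mem_range] at hk
    rw [gcnt_symm ws]
    congr 1
    have : k ≤ w := by omega
    push_cast [this]
    ring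

lemma gcnt_mono : ∀ (ws : List ℕ) (a b : ℤ), a ≤ b → a + b ≤ (ws.sum : ℤ) →
    gcnt ws a ≤ gcnt ws b
  | [], a, b, hab, hs => by
    simp only [List.sum_nil, Nat.cast_zero] at hs
    simp only [gcnt]
    by_cases hb : b = 0
    · subst hb
      split <;> simp
    · have ha : a ≠ 0 := by omega
      simp [ha, hb]
  | w :: ws, a, b, hab, hs => by
    have S := ((w :: ws).sum : ℤ)
    simp only [List.sum_cons, Nat.cast_add] at hs
    -- single step
    have step : ∀ x : ℤ, 2 * x + 1 ≤ (w : ℤ) + (ws.sum : ℤ) →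
        gcnt (w :: ws) x ≤ gcnt (w :: ws) (x + 1) := by
      intro x hx
      simp only [gcnt]
      rw [Finset.sum_range_succ, Finset.sum_range_succ']
      have h1 : ∀ k ∈ Finset.range w, gcnt ws (x - k) = gcnt ws (x + 1 - (k + 1 : ℕ)) := by
        intro k _
        congr 1
        push_cast
        ring
      rw [Finset.sum_congr rfl h1]
      have h2 : gcnt ws (x - w) ≤ gcnt ws (x + 1 - (0 : ℕ)) := by
        push_cast
        refine gcnt_mono ws _ _ (by omega) (by omega)
      omega
    -- climbing
    have climb : ∀ (k : ℕ) (x : ℤ), 2 * x + 2 * k ≤ (w : ℤ) + (ws.sum : ℤ) →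
        gcnt (w :: ws) x ≤ gcnt (w :: ws) (x + k) := by
      intro k
      induction k with
      | zero => intro x _; simp
      | succ k ih =>
        intro x hx
        have hc : ((k + 1 : ℕ) : ℤ) = (k : ℤ) + 1 := by push_cast; ring
        have h1 : gcnt (w :: ws) x ≤ gcnt (w :: ws) (x + 1) := step x (by omega)
        have h2 : gcnt (w :: ws) (x + 1) ≤ gcnt (w :: ws) (x + 1 + k) :=
          ih (x + 1) (by omega)
        have h3 : x + ((k + 1 : ℕ) : ℤ) = x + 1 + k := by rw [hc]; ring
        rw [h3]
        exact le_trans h1 h2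
    by_cases hb2 : 2 * b ≤ (w : ℤ) + (ws.sum : ℤ)
    · have := climb (b - a).toNat a (by omega)
      rwa [Int.toNat_of_nonneg (by omega), add_sub_cancel] at this
    · have hsym : gcnt (w :: ws) b = gcnt (w :: ws) (((w : ℤ) + (ws.sum : ℤ)) - b) := by
        have := gcnt_symm (w :: ws) b
        simpa [List.sum_cons] using this
      rw [hsym]
      set b' : ℤ := ((w : ℤ) + (ws.sum : ℤ)) - b with hb'
      have h1 : a ≤ b' := by omega
      have := climb (b' - a).toNat a (by omega)
      rwa [Int.toNat_of_nonneg (by omega), add_sub_cancel] at this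

/-- Finset of bounded tuples with given sum. -/
def Ftup {m : ℕ} (w : Fin m → ℕ) (a : ℕ) : Finset (Fin m → ℕ) :=
  (Fintype.piFinset fun i => Finset.range (w i + 1)).filter fun u => ∑ i, u i = a

lemma mem_Ftup {m : ℕ} {w : Fin m → ℕ} {a : ℕ} {u : Fin m → ℕ} :
    u ∈ Ftup w a ↔ (∀ i, u i ≤ w i) ∧ ∑ i, u i = a := by
  simp [Ftup, Fintype.mem_piFinset, Nat.lt_succ_iff]

lemma card_Ftup : ∀ {m : ℕ} (w : Fin m → ℕ) (a : ℕ),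
    (Ftup w a).card = gcnt (List.ofFn w) a := by
  intro m
  induction m with
  | zero =>
    intro w a
    simp only [List.ofFn_zero, gcnt]
    by_cases ha : a = 0
    · subst ha
      rw [if_pos (by norm_num)]
      have : Ftup w 0 = Fintype.piFinset fun i => Finset.range (w i + 1) :=
        Finset.filter_true_of_mem fun u _ => by simp
      rw [this, Fintype.card_piFinset]
      simp
    · rw [if_neg (by exact_mod_cast ha)]
      have : Ftup w a = ∅ := by
        ext u
        simp only [mem_Ftup, Finset.notMem_empty, iff_false]
        rintro ⟨-, h⟩
        exact ha (by simpa using h.symm)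
      simp [this]
  | succ m ih =>
    intro w a
    rw [List.ofFn_succ]
    simp only [gcnt]
    rw [Finset.card_eq_sum_card_fiberwise
      (f := fun u => u 0) (t := Finset.range (w 0 + 1))
      (fun u hu => by simp [Finset.mem_range, Nat.lt_succ_iff, (mem_Ftup.mp hu).1 0])]
    refine Finset.sum_congr rfl fun k hk => ?_
    rw [Finset.mem_range, Nat.lt_succ_iff] at hk
    by_cases hka : k ≤ a
    · have hcast : ((a : ℤ) - k) = ((a - k : ℕ) : ℤ) := by push_cast [hka]; ring
      rw [hcast, ← ih (fun i => w i.succ) (a - k)]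
      apply Finset.card_bij (fun u _ => Fin.tail u)
      · intro u hu
        simp only [Finset.mem_filter, mem_Ftup] at hu
        obtain ⟨⟨h1, h2⟩, h3⟩ := hu
        rw [mem_Ftup]
        constructor
        · intro i; exact h1 i.succ
        · have := Fin.sum_univ_succ u
          rw [h3] at this
          simp only [Fin.tail]
          omega
      · intro u hu v hv huv
        simp only [Finset.mem_filter] at hu hv
        funext i
        induction i using Fin.cases with
        | zero => rw [hu.2, hv.2]
        | succ i => exact congrFun huv i
      · intro v hv
        rw [mem_Ftup] at hv
        refine ⟨Fin.cons k v, ?_, ?_⟩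
        · simp only [Finset.mem_filter, mem_Ftup]
          refine ⟨⟨fun i => ?_, ?_⟩, by simp⟩
          · induction i using Fin.cases with
            | zero => simpa using hk
            | succ i => simpa using hv.1 i
          · rw [Fin.sum_univ_succ]
            simp [hv.2]
            omega
        · simp [Fin.tail_cons]
    · have h0 : ((Ftup w a).filter fun u => u 0 = k).card = 0 := by
        rw [Finset.card_eq_zero]
        ext u
        simp only [Finset.mem_filter, mem_Ftup, Finset.notMem_empty, iff_false]
        rintro ⟨⟨h1, h2⟩, h3⟩
        have : u 0 ≤ a := h2 ▸ Finset.single_le_sum (fun i _ => Nat.zero_le (u i)) (Finset.mem_univ 0)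
        omega
      have h1 : gcnt (List.ofFn fun i => w i.succ) ((a:ℤ) - k) = 0 := by
        apply gcnt_neg
        have hak : a < k := Nat.lt_of_not_le hka
        have : (a:ℤ) < (k:ℤ) := by exact_mod_cast hak
        linarith
      rw [h0, h1]

/-- The set of matrices with row sums `R` and column sums `C`. -/
def RCset (n : ℕ) (R C : Fin n → ℕ) : Set (Matrix (Fin n) (Fin n) ℕ) :=
  {D | (∀ i, ∑ j, D i j = R i) ∧ (∀ j, ∑ i, D i j = C j)}

lemma RCset_finite (n : ℕ) (R C : Fin n → ℕ) : (RCset n R C).Finite := by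
  have hfin : (Set.pi Set.univ fun i : Fin n =>
      Set.pi Set.univ fun _ : Fin n => Set.Iic (R i)).Finite :=
    Set.Finite.pi fun i => Set.Finite.pi fun _ => Set.finite_Iic (R i)
  refine hfin.subset ?_
  intro D hD
  rw [Set.mem_pi]
  intro i _
  rw [Set.mem_pi]
  intro j _
  rw [Set.mem_Iic, ← hD.1 i]
  exact Finset.single_le_sum (fun j' _ => Nat.zero_le _) (Finset.mem_univ j)

lemma fiber_embed {m : ℕ} (w : Fin m → ℕ) (a : ℕ) (h : (∑ c, w c) + 1 ≤ 2 * a) :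
    Nonempty ({u // u ∈ Ftup w a} ↪ {u // u ∈ Ftup w (a - 1)}) := by
  apply Function.Embedding.nonempty_of_card_le
  rw [Fintype.card_coe, Fintype.card_coe, card_Ftup, card_Ftup]
  set s : ℕ := ∑ c, w c with hsdef
  have hs : (List.ofFn w).sum = s := List.sum_ofFn
  have ha : 1 ≤ a := by omega
  rw [gcnt_symm, hs]
  apply gcnt_mono
  · omega
  · omega

lemma sum_split {n : ℕ} (i j : Fin n) (hij : i ≠ j) (f : Fin n → ℕ) :
    ∑ k, f k = f i + f j + ∑ k ∈ (Finset.univ.erase i).erase j, f k := by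
  rw [← Finset.add_sum_erase _ f (Finset.mem_univ i),
    ← Finset.add_sum_erase _ f (Finset.mem_erase.mpr ⟨Ne.symm hij, Finset.mem_univ j⟩),
    add_assoc]

lemma step_le (n : ℕ) (R C : Fin n → ℕ) (i j : Fin n) (hij : i ≠ j) (h2 : R j + 2 ≤ R i) :
    Nat.card (RCset n R C) ≤
      Nat.card (RCset n (Function.update (Function.update R i (R i - 1)) j (R j + 1)) C) := by
  classical
  set R' := Function.update (Function.update R i (R i - 1)) j (R j + 1) with hR'
  haveI : Finite (RCset n R' C) := (RCset_finite n R' C).to_subtype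
  -- choose fiberwise injections
  have key : ∀ w : Fin n → ℕ, ∃ e : (Fin n → ℕ) → (Fin n → ℕ),
      (∑ c, w c = R i + R j) →
        (Set.InjOn e (Ftup w (R i)) ∧ ∀ u ∈ Ftup w (R i), e u ∈ Ftup w (R i - 1)) := by
    intro w
    by_cases hw : ∑ c, w c = R i + R j
    · obtain ⟨emb⟩ := fiber_embed w (R i) (by omega)
      refine ⟨fun u => if h : u ∈ Ftup w (R i) then (emb ⟨u, h⟩).1 else u, fun _ => ⟨?_, ?_⟩⟩
      · intro u hu v hv huv
        have hu2 : u ∈ Ftup w (R i) := hu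
        have hv2 : v ∈ Ftup w (R i) := hv
        simp only [dif_pos hu2, dif_pos hv2] at huv
        have := emb.injective (Subtype.ext huv)
        exact congrArg Subtype.val this
      · intro u hu
        simp only [dif_pos hu]
        exact (emb ⟨u, hu⟩).2
    · exact ⟨id, fun h => absurd h hw⟩
  choose e he using key
  -- the step map
  set w : Matrix (Fin n) (Fin n) ℕ → (Fin n → ℕ) := fun D c => D i c + D j c with hwdef
  set sm : Matrix (Fin n) (Fin n) ℕ → Matrix (Fin n) (Fin n) ℕ := fun D =>
    Function.update (Function.update D i (e (w D) (D i))) j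
      (fun c => w D c - e (w D) (D i) c) with hsm
  have hwD : ∀ D, D ∈ RCset n R C → ∑ c, w D c = R i + R j := by
    intro D hD
    simp only [hwdef]
    rw [Finset.sum_add_distrib, hD.1 i, hD.1 j]
  have hmemD : ∀ D, D ∈ RCset n R C → D i ∈ Ftup (w D) (R i) :=
    fun D hD => mem_Ftup.mpr ⟨fun c => Nat.le_add_right _ _, hD.1 i⟩
  have hu' : ∀ D, D ∈ RCset n R C → e (w D) (D i) ∈ Ftup (w D) (R i - 1) :=
    fun D hD => (he (w D) (hwD D hD)).2 _ (hmemD D hD)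
  -- row identification of the image
  have hrow_i : ∀ D, sm D i = e (w D) (D i) := by
    intro D
    simp only [hsm]
    rw [Function.update_of_ne hij]; exact Function.update_self _ _ _
  have hrow_j : ∀ D, sm D j = fun c => w D c - e (w D) (D i) c := by
    intro D
    simp only [hsm]
    rw [Function.update_self]
  have hrow_other : ∀ D k, k ≠ i → k ≠ j → sm D k = D k := by
    intro D k hki hkj
    simp only [hsm]
    rw [Function.update_of_ne hkj]; exact Function.update_of_ne hki _ _
  -- the image lies in RCset n R' C
  have hmaps : ∀ D, D ∈ RCset n R C → sm D ∈ RCset n R' C := by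
    intro D hD
    obtain ⟨hle, hsum⟩ := mem_Ftup.mp (hu' D hD)
    constructor
    · intro k
      by_cases hki : k = i
      · subst hki
        rw [hrow_i D, hsum, hR', Function.update_of_ne hij, Function.update_self]
      · by_cases hkj : k = j
        · rw [hkj]
          have hs : ∑ c, (w D c - e (w D) (D i) c) + ∑ c, e (w D) (D i) c = ∑ c, w D c := by
            rw [← Finset.sum_add_distrib]
            exact Finset.sum_congr rfl fun c _ => Nat.sub_add_cancel (hle c)
          have h3 := hwD D hD
          have hb : ∑ c, sm D j c = ∑ c, (w D c - e (w D) (D i) c) :=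
            Finset.sum_congr rfl fun c _ => congrFun (hrow_j D) c
          have hR'j : R' j = R j + 1 := by rw [hR']; exact Function.update_self _ _ _
          omega
        · rw [hrow_other D k hki hkj, hR', Function.update_of_ne hkj,
            Function.update_of_ne hki]
          exact hD.1 k
    · intro c
      have hsplit1 := sum_split i j hij (fun k => sm D k c)
      have hsplit2 := sum_split i j hij (fun k => D k c)
      have hrest : ∑ k ∈ (Finset.univ.erase i).erase j, sm D k c
          = ∑ k ∈ (Finset.univ.erase i).erase j, D k c := by
        refine Finset.sum_congr rfl fun k hk => ?_
        rw [Finset.mem_erase, Finset.mem_erase] at hk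
        rw [hrow_other D k hk.2.1 hk.1]
      have hic : sm D i c = e (w D) (D i) c := congrFun (hrow_i D) c
      have hjc : sm D j c = w D c - e (w D) (D i) c := congrFun (hrow_j D) c
      have hD2 := hD.2 c
      have hwc : w D c = D i c + D j c := rfl
      have hlec := hle c
      omega
  -- injectivity
  have hinj : Set.InjOn sm (RCset n R C) := by
    intro D1 h1 D2 h2eq heq
    have hw1 : w D1 = w D2 := by
      funext c
      have e1 : sm D1 i c + sm D1 j c = w D1 c := by
        rw [hrow_i D1, hrow_j D1]
        exact Nat.add_sub_cancel' ((mem_Ftup.mp (hu' D1 h1)).1 c)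
      have e2 : sm D2 i c + sm D2 j c = w D2 c := by
        rw [hrow_i D2, hrow_j D2]
        exact Nat.add_sub_cancel' ((mem_Ftup.mp (hu' D2 h2eq)).1 c)
      rw [heq] at e1
      omega
    have hei : D1 i = D2 i := by
      have hiq : e (w D1) (D1 i) = e (w D1) (D2 i) := by
        have g1 := hrow_i D1
        have g2 := hrow_i D2
        rw [heq] at g1
        rw [g2] at g1
        rw [hw1] at g1 ⊢
        exact g1.symm
      exact (he (w D1) (hwD D1 h1)).1 (hmemD D1 h1) (hw1 ▸ hmemD D2 h2eq) (hw1 ▸ hiq)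
    funext k
    by_cases hki : k = i
    · subst hki; exact hei
    · by_cases hkj : k = j
      · subst hkj
        funext c
        have := congrFun hw1 c
        simp only [hwdef] at this
        have := congrFun hei c
        omega
      · have g1 := hrow_other D1 k hki hkj
        have g2 := hrow_other D2 k hki hkj
        rw [heq] at g1
        rw [g2] at g1
        exact g1.symm
  calc Nat.card (RCset n R C) = Nat.card ((RCset n R C) : Set _) := rfl
    _ ≤ Nat.card (RCset n R' C) := by
      apply Nat.card_le_card_of_injective
        (fun p : ↥(RCset n R C) => (⟨sm p.1, hmaps p.1 p.2⟩ : ↥(RCset n R' C)))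
      intro p q hpq
      exact Subtype.ext (hinj p.2 q.2 (congrArg Subtype.val hpq))

lemma card_RC_transpose (n : ℕ) (R C : Fin n → ℕ) :
    Nat.card (RCset n R C) = Nat.card (RCset n C R) := by
  apply Nat.card_congr
  refine ⟨fun p => ⟨p.1.transpose, p.2.2, p.2.1⟩, fun p => ⟨p.1.transpose, p.2.2, p.2.1⟩,
    fun p => rfl, fun p => rfl⟩

lemma to_uniform (n t : ℕ) (C : Fin n → ℕ) (hC : ∑ c, C c = n * t) :
    ∀ (m : ℕ) (R : Fin n → ℕ), (∑ k, R k = n * t) → (∑ k, ((R k - t) + (t - R k)) = m) →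
      Nat.card (RCset n R C) ≤ Nat.card (RCset n (fun _ => t) C) := by
  intro m
  induction m using Nat.strong_induction_on with
  | _ m ih =>
    intro R hR hm
    by_cases huni : ∀ k, R k = t
    · have : R = fun _ => t := funext huni
      rw [this]
    · push_neg at huni
      obtain ⟨k0, hk0⟩ := huni
      have hex_hi : ∃ i, t < R i := by
        by_contra hall
        push_neg at hall
        have hlt : ∑ k, R k < ∑ k : Fin n, t := by
          apply Finset.sum_lt_sum (fun k _ => hall k)
          exact ⟨k0, Finset.mem_univ k0, lt_of_le_of_ne (hall k0) hk0⟩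
        rw [hR, Finset.sum_const, Finset.card_univ, Fintype.card_fin, smul_eq_mul] at hlt
        omega
      have hex_lo : ∃ j, R j < t := by
        by_contra hall
        push_neg at hall
        have hk0' : t < R k0 := lt_of_le_of_ne (hall k0) (Ne.symm hk0)
        have hlt : ∑ k : Fin n, t < ∑ k, R k := by
          apply Finset.sum_lt_sum (fun k _ => hall k)
          exact ⟨k0, Finset.mem_univ k0, hk0'⟩
        rw [hR, Finset.sum_const, Finset.card_univ, Fintype.card_fin, smul_eq_mul] at hlt
        omega
      obtain ⟨i, hi⟩ := hex_hi
      obtain ⟨j, hj⟩ := hex_lo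
      have hij : i ≠ j := fun h => by rw [h] at hi; omega
      set R' := Function.update (Function.update R i (R i - 1)) j (R j + 1) with hR'
      have hR'i : R' i = R i - 1 := by
        rw [hR', Function.update_of_ne hij, Function.update_self]
      have hR'j : R' j = R j + 1 := by rw [hR']; exact Function.update_self _ _ _
      have hR'other : ∀ k, k ≠ i → k ≠ j → R' k = R k := fun k hki hkj => by
        rw [hR', Function.update_of_ne hkj, Function.update_of_ne hki]
      have hsplitR := sum_split i j hij R
      have hsplitR' := sum_split i j hij R'
      have hrest : ∑ k ∈ (Finset.univ.erase i).erase j, R' k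
          = ∑ k ∈ (Finset.univ.erase i).erase j, R k := by
        refine Finset.sum_congr rfl fun k hk => ?_
        rw [Finset.mem_erase, Finset.mem_erase] at hk
        exact hR'other k hk.2.1 hk.1
      have hsum' : ∑ k, R' k = n * t := by omega
      -- measure computation
      have hsplitm := sum_split i j hij (fun k => (R k - t) + (t - R k))
      have hsplitm' := sum_split i j hij (fun k => (R' k - t) + (t - R' k))
      have hrestm : ∑ k ∈ (Finset.univ.erase i).erase j, ((R' k - t) + (t - R' k))
          = ∑ k ∈ (Finset.univ.erase i).erase j, ((R k - t) + (t - R k)) := by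
        refine Finset.sum_congr rfl fun k hk => ?_
        rw [Finset.mem_erase, Finset.mem_erase] at hk
        rw [hR'other k hk.2.1 hk.1]
      have hm' : ∑ k, ((R' k - t) + (t - R' k)) = m - 2 := by omega
      have hmlt : m - 2 < m := by omega
      calc Nat.card (RCset n R C) ≤ Nat.card (RCset n R' C) :=
            step_le n R C i j hij (by omega)
        _ ≤ Nat.card (RCset n (fun _ => t) C) := ih (m - 2) hmlt R' hsum' hm'

lemma card_sum_eq (α : Type*) [Fintype α] [DecidableEq α] (m : ℕ) (hpos : 0 < Fintype.card α) :
    Nat.card {f : α → ℕ // ∑ a, f a = m} = (m + Fintype.card α - 1).choose (Fintype.card α - 1) := by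
  rw [Nat.card_congr (Sym.equivNatSumOfFintype α m).symm, Nat.card_eq_fintype_card,
    Sym.card_sym_eq_choose]
  rw [add_comm (Fintype.card α) m]
  rw [← Nat.choose_symm (by omega : m ≤ m + Fintype.card α - 1)]
  congr 1
  omega

lemma comp_finite (k m : ℕ) : {f : Fin k → ℕ | ∑ x, f x = m}.Finite := by
  have hfin : (Set.pi Set.univ fun _ : Fin k => Set.Iic m).Finite :=
    Set.Finite.pi fun _ => Set.finite_Iic m
  refine hfin.subset ?_
  intro f hf
  rw [Set.mem_pi]
  intro x _
  rw [Set.mem_Iic, ← hf]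
  exact Finset.single_le_sum (fun y _ => Nat.zero_le _) (Finset.mem_univ x)

lemma emb_of_ncard_le {α β : Type*} [Finite α] [Finite β] (h : Nat.card α ≤ Nat.card β) :
    Nonempty (α ↪ β) := by
  haveI := Fintype.ofFinite α
  haveI := Fintype.ofFinite β
  rw [Nat.card_eq_fintype_card, Nat.card_eq_fintype_card] at h
  exact Function.Embedding.nonempty_of_card_le h

instance RCset_uniform_nonempty (n t : ℕ) :
    Nonempty ↥(RCset n (fun _ => t) (fun _ => t)) := by
  refine ⟨⟨Matrix.diagonal fun _ => t, ?_, ?_⟩⟩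
  · intro i
    simp [Matrix.diagonal]
  · intro j
    simp [Matrix.diagonal]

lemma class_card_le (n t : ℕ) (R C : Fin n → ℕ) (hR : ∑ k, R k = n * t)
    (hC : ∑ k, C k = n * t) :
    Nat.card (RCset n R C) ≤ Nat.card (RCset n (fun _ => t) (fun _ => t)) := by
  have hτ : ∑ k : Fin n, t = n * t := by
    rw [Finset.sum_const, Finset.card_univ, Fintype.card_fin, smul_eq_mul]
  calc Nat.card (RCset n R C)
      ≤ Nat.card (RCset n (fun _ => t) C) := to_uniform n t C hC _ R hR rfl
    _ = Nat.card (RCset n C (fun _ => t)) := card_RC_transpose n _ C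
    _ ≤ Nat.card (RCset n (fun _ => t) (fun _ => t)) := to_uniform n t _ hτ _ C hC rfl

lemma grand (n t : ℕ) (hn : 0 < n) :
    (n * t + n ^ 2 - 1).choose (n ^ 2 - 1) ≤
      ((n * t + n - 1).choose (n - 1)) ^ 2 *
        Nat.card (RCset n (fun _ => t) (fun _ => t)) := by
  classical
  set N := n * t with hN
  -- total number of matrices with entry sum N
  have htotal : Nat.card {D : Matrix (Fin n) (Fin n) ℕ // ∑ i, ∑ j, D i j = N} =
      (N + n ^ 2 - 1).choose (n ^ 2 - 1) := by
    have e1 : {D : Matrix (Fin n) (Fin n) ℕ // ∑ i, ∑ j, D i j = N} ≃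
        {f : Fin n × Fin n → ℕ // ∑ p, f p = N} :=
      (Equiv.subtypeEquiv (Equiv.curry (Fin n) (Fin n) ℕ).symm (fun D => by
        rw [Fintype.sum_prod_type]
        exact Iff.rfl))
    have hcard : Fintype.card (Fin n × Fin n) = n ^ 2 := by
      rw [Fintype.card_prod]; simp [sq]
    rw [Nat.card_congr e1, card_sum_eq _ N
      (by rw [hcard]; positivity), hcard]
  -- number of pairs of margins
  have hpairs : Nat.card {p : (Fin n → ℕ) × (Fin n → ℕ) //
      (∑ k, p.1 k = N) ∧ (∑ k, p.2 k = N)} = ((N + n - 1).choose (n - 1)) ^ 2 := by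
    rw [Nat.card_congr (Equiv.subtypeProdEquivProd (p := fun f : Fin n → ℕ => ∑ k, f k = N) (q := fun f : Fin n → ℕ => ∑ k, f k = N)), Nat.card_prod,
      card_sum_eq _ N (by simpa using hn), Fintype.card_fin, sq]
  -- finiteness
  haveI hfin1 : Finite {p : (Fin n → ℕ) × (Fin n → ℕ) //
      (∑ k, p.1 k = N) ∧ (∑ k, p.2 k = N)} := by
    haveI : Finite {f : Fin n → ℕ // ∑ k, f k = N} := (comp_finite n N).to_subtype
    exact Finite.of_equiv _ (Equiv.subtypeProdEquivProd
      (p := fun f : Fin n → ℕ => ∑ k, f k = N)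
      (q := fun f : Fin n → ℕ => ∑ k, f k = N)).symm
  haveI hfin2 : Finite ↥(RCset n (fun _ => t) (fun _ => t)) :=
    (RCset_finite n _ _).to_subtype
  -- the injection
  have key2 : ∀ p : (Fin n → ℕ) × (Fin n → ℕ),
      ∃ e : Matrix (Fin n) (Fin n) ℕ → ↥(RCset n (fun _ => t) (fun _ => t)),
        ((∑ k, p.1 k = N) ∧ (∑ k, p.2 k = N)) → Set.InjOn e (RCset n p.1 p.2) := by
    intro p
    by_cases hp : (∑ k, p.1 k = N) ∧ (∑ k, p.2 k = N)
    · haveI : Finite ↥(RCset n p.1 p.2) := (RCset_finite n _ _).to_subtype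
      obtain ⟨emb⟩ := emb_of_ncard_le (class_card_le n t p.1 p.2 hp.1 hp.2)
      refine ⟨fun D => if h : D ∈ RCset n p.1 p.2 then emb ⟨D, h⟩
        else Classical.arbitrary _, fun _ => ?_⟩
      intro D1 h1 D2 h2 heq
      simp only [dif_pos h1, dif_pos h2] at heq
      have := emb.injective heq
      exact congrArg Subtype.val this
    · exact ⟨fun _ => Classical.arbitrary _, fun h => absurd h hp⟩
  choose eMap heMap using key2
  -- build the global injection
  set Ψ : {D : Matrix (Fin n) (Fin n) ℕ // ∑ i, ∑ j, D i j = N} →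
      ({p : (Fin n → ℕ) × (Fin n → ℕ) // (∑ k, p.1 k = N) ∧ (∑ k, p.2 k = N)} ×
        ↥(RCset n (fun _ => t) (fun _ => t))) := fun q =>
    (⟨((fun i => ∑ j, q.1 i j), (fun j => ∑ i, q.1 i j)),
        by exact q.2, by rw [Finset.sum_comm]; exact q.2⟩,
      eMap ((fun i => ∑ j, q.1 i j), (fun j => ∑ i, q.1 i j)) q.1) with hΨ
  have hΨinj : Function.Injective Ψ := by
    intro q1 q2 heq
    have hfst : (Ψ q1).1 = (Ψ q2).1 := congrArg Prod.fst heq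
    have hsnd : (Ψ q1).2 = (Ψ q2).2 := congrArg Prod.snd heq
    have hp : ((fun i => ∑ j, q1.1 i j), (fun j => ∑ i, q1.1 i j))
        = ((fun i => ∑ j, q2.1 i j), (fun j => ∑ i, q2.1 i j)) :=
      congrArg Subtype.val hfst
    simp only [hΨ] at hsnd
    rw [← hp] at hsnd
    have hmem1 : q1.1 ∈ RCset n (fun i => ∑ j, q1.1 i j) (fun j => ∑ i, q1.1 i j) :=
      ⟨fun _ => rfl, fun _ => rfl⟩
    have hmem2 : q2.1 ∈ RCset n (fun i => ∑ j, q1.1 i j) (fun j => ∑ i, q1.1 i j) := by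
      have h1 : (fun i => ∑ j, q1.1 i j) = (fun i => ∑ j, q2.1 i j) := congrArg Prod.fst hp
      have h2 : (fun j => ∑ i, q1.1 i j) = (fun j => ∑ i, q2.1 i j) := congrArg Prod.snd hp
      rw [h1, h2]
      exact ⟨fun _ => rfl, fun _ => rfl⟩
    exact Subtype.ext (heMap ((fun i => ∑ j, q1.1 i j), (fun j => ∑ i, q1.1 i j))
      ⟨q1.2, by rw [Finset.sum_comm]; exact q1.2⟩ hmem1 hmem2 hsnd)
  have hle := Nat.card_le_card_of_injective Ψ hΨinj
  rw [htotal, Nat.card_prod, hpairs] at hle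
  exact hle

/-- The number of `n × n` magic squares with line sum `t` satisfies
`|Σ(n,t)| ≥ C(N+n−1, n−1)⁻² · C(N+n²−1, n²−1)` where `N = n * t`. -/
theorem magic_squares_lower_bound (n t : ℕ) (hn : 0 < n) (ht : 0 < t) :
    ((Nat.choose (n * t + n - 1) (n - 1) : ℝ))⁻¹ ^ 2 *
        Nat.choose (n * t + n ^ 2 - 1) (n ^ 2 - 1) ≤
      (Set.ncard {D : Matrix (Fin n) (Fin n) ℕ |
        (∀ i, ∑ j, D i j = t) ∧ (∀ j, ∑ i, D i j = t)} : ℝ) := by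
  have hset : {D : Matrix (Fin n) (Fin n) ℕ |
      (∀ i, ∑ j, D i j = t) ∧ (∀ j, ∑ i, D i j = t)}
      = RCset n (fun _ => t) (fun _ => t) := rfl
  rw [hset, ← Nat.card_coe_set_eq]
  have hkey := grand n t hn
  have hcpos : (0 : ℝ) < ((n * t + n - 1).choose (n - 1) : ℝ) := by
    exact_mod_cast Nat.choose_pos (by omega)
  rw [inv_pow, inv_mul_le_iff₀ (by positivity)]
  exact_mod_cast hkey
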